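/- arXiv:2302.12884 — 2 statements merged into one kernel-verified Lean document; each statement's English description precedes it below -/
import Mathlib

section
/- Let W ∈ ℂ^{m×m}, and let Q₁, Q₂ : ℂ^n → ℂ^{m×n} be maps satisfying the intertwining property Q₁(x) y = Q₂(y) x for all x, y ∈ ℂ^n. Define E(v) = (Q₁(v)^H W Q₁(v) + Q₂(v)^H W Q₂(v)) / 2 for v ∈ ℂ^n. Then for all x, y ∈ ℂ^n one has x^H E(y) x = y^H E(x) y. -/
open Matrix

lemma quad_form_eq (m n : ℕ) (W : Matrix (Fin m) (Fin m) ℂ)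
    (A : Matrix (Fin m) (Fin n) ℂ) (x : Fin n → ℂ) :
    star x ⬝ᵥ (Aᴴ * W * A).mulVec x = star (A.mulVec x) ⬝ᵥ W.mulVec (A.mulVec x) := by
  rw [← mulVec_mulVec, ← mulVec_mulVec, dotProduct_mulVec, ← star_mulVec,
    dotProduct_mulVec, dotProduct_mulVec]

/-- If `Q₁(x) y = Q₂(y) x` for all `x, y ∈ ℂ^n` and
`E(v) = (Q₁(v)ᴴ W Q₁(v) + Q₂(v)ᴴ W Q₂(v))/2`, then `xᴴ E(y) x = yᴴ E(x) y`. -/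
theorem stmt_3 (m n : ℕ) (W : Matrix (Fin m) (Fin m) ℂ)
    (Q₁ Q₂ : (Fin n → ℂ) → Matrix (Fin m) (Fin n) ℂ)
    (hQ : ∀ x y : Fin n → ℂ, (Q₁ x).mulVec y = (Q₂ y).mulVec x)
    (E : (Fin n → ℂ) → Matrix (Fin n) (Fin n) ℂ)
    (hE : ∀ v, E v = (2 : ℂ)⁻¹ • ((Q₁ v)ᴴ * W * Q₁ v + (Q₂ v)ᴴ * W * Q₂ v)) :
    ∀ x y : Fin n → ℂ, star x ⬝ᵥ (E y).mulVec x = star y ⬝ᵥ (E x).mulVec y := by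
  intro x y
  simp only [hE, smul_add, add_mulVec, smul_mulVec, dotProduct_add, dotProduct_smul]
  rw [quad_form_eq, quad_form_eq, quad_form_eq, quad_form_eq, hQ x y, hQ y x, add_comm]
end

section
/- Let G ∈ ℂ^{n×n} be Hermitian positive semidefinite, let s ∈ ℂ^n be a unimodular vector, and let s′ ∈ ℂ^n be any unimodular vector such that for every index j with (G s)_j ≠ 0, s′_j = (G s)_j / |(G s)_j|. Then s′^H G s′ ≥ s^H G s (both quadratic forms being real numbers). -/
open Matrix
open scoped ComplexOrder

/-- Monotonicity of the power-method-like iteration: if `G` is Hermitian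
positive semidefinite, `s` is unimodular, and `s′` is unimodular with
`s′_j = (G s)_j / |(G s)_j|` whenever `(G s)_j ≠ 0`, then `s′ᴴ G s′ ≥ sᴴ G s`. -/
theorem stmt_17 (n : ℕ) (G : Matrix (Fin n) (Fin n) ℂ) (hG : G.PosSemidef)
    (s s' : Fin n → ℂ)
    (hs : ∀ j, ‖s j‖ = 1) (hs' : ∀ j, ‖s' j‖ = 1)
    (halign : ∀ j, G.mulVec s j ≠ 0 →
      s' j = G.mulVec s j / (‖G.mulVec s j‖ : ℂ)) :
    (star s ⬝ᵥ G.mulVec s).re ≤ (star s' ⬝ᵥ G.mulVec s').re := by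
  -- key: Re(s'ᴴ G s) ≥ Re(sᴴ G s), entrywise
  have hkey : (star s ⬝ᵥ G.mulVec s).re ≤ (star s' ⬝ᵥ G.mulVec s).re := by
    simp only [dotProduct, Pi.star_apply, Complex.re_sum]
    apply Finset.sum_le_sum
    intro j _
    by_cases hj : G.mulVec s j = 0
    · simp [hj]
    · rw [halign j hj]
      have habs : (star (G.mulVec s j / (‖G.mulVec s j‖ : ℂ)) *
          G.mulVec s j).re = ‖G.mulVec s j‖ := by
        have h0 : (‖G.mulVec s j‖ : ℂ) ≠ 0 := by
          exact_mod_cast norm_ne_zero_iff.mpr hj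
        rw [RCLike.star_def, map_div₀, Complex.conj_ofReal, div_mul_eq_mul_div,
          mul_comm, Complex.mul_conj']
        simp [Complex.normSq_eq_norm_sq, pow_two, mul_div_assoc,
          mul_div_cancel_left₀ _ (norm_ne_zero_iff.mpr hj)]
      rw [habs]
      calc (star (s j) * G.mulVec s j).re ≤ ‖star (s j) * G.mulVec s j‖ :=
            Complex.re_le_norm _
        _ = ‖G.mulVec s j‖ := by
            rw [norm_mul]; simp [hs j]
  -- PSD expansion
  have hpsd := hG.dotProduct_mulVec_nonneg (s' - s)
  have hre : 0 ≤ (star (s' - s) ⬝ᵥ G.mulVec (s' - s)).re := by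
    rw [Complex.le_def] at hpsd; exact hpsd.1
  have hexp : star (s' - s) ⬝ᵥ G.mulVec (s' - s) =
      star s' ⬝ᵥ G.mulVec s' - star s' ⬝ᵥ G.mulVec s
        - star s ⬝ᵥ G.mulVec s' + star s ⬝ᵥ G.mulVec s := by
    rw [star_sub, mulVec_sub, sub_dotProduct, dotProduct_sub, dotProduct_sub]
    ring
  -- Hermitian symmetry in real parts
  have hsym : (star s ⬝ᵥ G.mulVec s').re = (star s' ⬝ᵥ G.mulVec s).re := by
    have : star s ⬝ᵥ G.mulVec s' = star (star (G.mulVec s') ⬝ᵥ s) := star_dotProduct _ _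
    rw [this, star_mulVec, hG.1.eq, ← dotProduct_mulVec]
    simp [Complex.conj_re]
  rw [hexp] at hre
  simp only [Complex.add_re, Complex.sub_re] at hre
  rw [hsym] at hre
  linarith
end
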